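/- Let G be a labeled finite simple graph with corank(A(G)+E) = 0 over Z_2, and let G~ be obtained by Ω_g2 (adding non-adjacent vertices u labeled + and v labeled − with identical neighborhoods in G). Then the writhe numbers coincide: w(G~) = w(G). In particular, corank B_u(G~) = corank B_v(G~), where B_x denotes A+E with the diagonal entry at x changed from 1 to 0. -/

import Mathlib

open Matrix LaurentPolynomial
open scoped Classical

noncomputable section

def adjMatS {V : Type} (G : SimpleGraph V) (s : Finset V) : Matrix s s (ZMod 2) :=
  fun i j => if G.Adj i.1 j.1 then 1 else 0

def corankS {V : Type} (G : SimpleGraph V) (s : Finset V) : ℕ :=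
  s.card - (adjMatS G s).rank

def adjMat {V : Type} [Fintype V] (G : SimpleGraph V) : Matrix V V (ZMod 2) :=
  fun i j => if G.Adj i j then 1 else 0

def corankM {m : Type} [Fintype m] (M : Matrix m m (ZMod 2)) : ℕ :=
  Fintype.card m - M.rank

def alphaCount {V : Type} [Fintype V] (σ : V → Bool) (s : Finset V) : ℕ :=
  (s.filter (fun i => σ i = false)).card + ((sᶜ).filter (fun i => σ i = true)).card

def bracket {V : Type} [Fintype V] (G : SimpleGraph V) (σ : V → Bool) : LaurentPolynomial ℚ :=
  ∑ s : Finset V, T (2 * (alphaCount σ s : ℤ) - (Fintype.card V : ℤ)) *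
    (-T 2 - T (-2)) ^ (corankS G s)

def lspan (p : LaurentPolynomial ℚ) : ℤ := (WithBot.unbotD 0 p.coeff.support.max) - (WithTop.untopD 0 p.coeff.support.min)

def Bmat {V : Type} [Fintype V] (G : SimpleGraph V) (x : V) : Matrix V V (ZMod 2) :=
  adjMat G + 1 + Matrix.single x x 1

def writhe {V : Type} [Fintype V] (G : SimpleGraph V) (σ : V → Bool) : ℤ :=
  ∑ x, (-1 : ℤ) ^ (corankM (Bmat G x)) * (if σ x then 1 else -1)

def extAdj {V : Type} (G : SimpleGraph V) (N : Set V) : V ⊕ Bool → V ⊕ Bool → Prop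
  | .inl i, .inl j => G.Adj i j
  | .inl i, .inr _ => i ∈ N
  | .inr _, .inl j => j ∈ N
  | .inr _, .inr _ => False

def ext2 {V : Type} (G : SimpleGraph V) (N : Set V) : SimpleGraph (V ⊕ Bool) where
  Adj := extAdj G N
  symm := by
    constructor
    rintro (i|b) (j|c) h
    · exact G.symm.symm _ _ h
    · exact h
    · exact h
    · exact h
  loopless := by
    constructor
    rintro (i|b) h
    · exact G.irrefl h
    · exact h

def optExt {V : Type} (G : SimpleGraph V) : SimpleGraph (Option V) where
  Adj x y := match x, y with
    | some i, some j => G.Adj i j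
    | _, _ => False
  symm := by
    constructor
    rintro (_|i) (_|j) h
    · exact h
    · exact h
    · exact h
    · exact G.symm.symm _ _ h
  loopless := by
    constructor
    rintro (_|i) h
    · exact h
    · exact G.irrefl h

section Aux

variable {V : Type} [Fintype V]

lemma corankM_eq_finrank_ker {m : Type} [Fintype m] (M : Matrix m m (ZMod 2)) :
    corankM M = Module.finrank (ZMod 2) (LinearMap.ker M.mulVecLin) := by
  have h := LinearMap.finrank_range_add_finrank_ker M.mulVecLin
  rw [Module.finrank_fintype_fun_eq_card] at h
  simp only [corankM, Matrix.rank]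
  omega

/-- indicator vector of `N` -/
def nvec (N : Set V) : V → ZMod 2 := fun i => if i ∈ N then 1 else 0

lemma Bmat_ext_inl (G : SimpleGraph V) (N : Set V) (x : V) :
    Bmat (ext2 G N) (Sum.inl x) =
      Matrix.fromBlocks (Bmat G x) (Matrix.of fun i _ => nvec N i) (Matrix.of fun _ j => nvec N j) 1 := by
  ext i j
  rcases i with i | b <;> rcases j with j | c <;>
    simp [Bmat, adjMat, ext2, extAdj, nvec, Matrix.fromBlocks, Matrix.one_apply,
      Matrix.single, Matrix.add_apply] <;> congr

lemma mulVec_ext (G : SimpleGraph V) (N : Set V) (x : V) (y : V ⊕ Bool → ZMod 2) :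
    (Bmat (ext2 G N) (Sum.inl x)).mulVec y =
      Sum.elim
        ((Bmat G x).mulVec (y ∘ Sum.inl) +
          fun i => nvec N i * (y (Sum.inr true) + y (Sum.inr false)))
        (fun b => (∑ j, nvec N j * y (Sum.inl j)) + y (Sum.inr b)) := by
  rw [Bmat_ext_inl, Matrix.fromBlocks_mulVec, Matrix.one_mulVec]
  funext z
  rcases z with i | b <;>
    simp [Matrix.mulVec, dotProduct, Fintype.sum_bool, mul_add, Function.comp]

/-- the linear map sending `u` to its canonical extension -/
def extMap (N : Set V) : (V → ZMod 2) →ₗ[ZMod 2] (V ⊕ Bool → ZMod 2) where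
  toFun u := Sum.elim u (fun _ => ∑ j, nvec N j * u j)
  map_add' u v := by
    funext z
    rcases z with i | b <;> simp [mul_add, Finset.sum_add_distrib]
  map_smul' c u := by
    funext z
    rcases z with i | b <;>
      simp [Finset.mul_sum, smul_eq_mul, mul_left_comm]

lemma corank_Bmat_inl (G : SimpleGraph V) (N : Set V) (x : V) :
    corankM (Bmat (ext2 G N) (Sum.inl x)) = corankM (Bmat G x) := by
  rw [corankM_eq_finrank_ker, corankM_eq_finrank_ker]
  have two : ∀ a : ZMod 2, a + a = 0 := by decide
  -- forward map: restriction
  have hF : ∀ y ∈ LinearMap.ker (Bmat (ext2 G N) (Sum.inl x)).mulVecLin,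
      (LinearMap.funLeft (ZMod 2) (ZMod 2) (Sum.inl : V → V ⊕ Bool)) y ∈
        LinearMap.ker (Bmat G x).mulVecLin := by
    intro y hy
    rw [LinearMap.mem_ker, Matrix.mulVecLin_apply] at hy ⊢
    rw [mulVec_ext] at hy
    have ht := congrFun hy (Sum.inr true)
    have hf := congrFun hy (Sum.inr false)
    simp only [Sum.elim_inr, Pi.zero_apply] at ht hf
    have hw : y (Sum.inr true) = y (Sum.inr false) := by
      exact add_left_cancel (ht.trans hf.symm)
    funext i
    have hi := congrFun hy (Sum.inl i)
    simp only [Sum.elim_inl, Pi.add_apply, Pi.zero_apply] at hi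
    rw [hw, two, mul_zero, add_zero] at hi
    exact (by simpa using hi : (Bmat G x *ᵥ y ∘ Sum.inl) i = 0)
  have hG : ∀ u ∈ LinearMap.ker (Bmat G x).mulVecLin,
      extMap N u ∈ LinearMap.ker (Bmat (ext2 G N) (Sum.inl x)).mulVecLin := by
    intro u hu
    rw [LinearMap.mem_ker, Matrix.mulVecLin_apply] at hu ⊢
    rw [mulVec_ext]
    funext z
    rcases z with i | b
    · simp only [Sum.elim_inl, Pi.add_apply, Pi.zero_apply]
      have h1 : (extMap N u) ∘ Sum.inl = u := by funext j; simp [extMap]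
      rw [h1, hu]
      simp [extMap, two]
    · simp only [Sum.elim_inr, Pi.zero_apply]
      simp [extMap, two]
  let e : LinearMap.ker (Bmat (ext2 G N) (Sum.inl x)).mulVecLin ≃ₗ[ZMod 2]
      LinearMap.ker (Bmat G x).mulVecLin :=
    LinearEquiv.ofLinear
      ((LinearMap.funLeft (ZMod 2) (ZMod 2) (Sum.inl : V → V ⊕ Bool)).restrict hF)
      ((extMap N).restrict hG)
      (by
        ext u i
        simp [LinearMap.restrict_apply, LinearMap.funLeft, extMap])
      (by
        ext ⟨y, hy⟩ z
        rw [LinearMap.mem_ker, Matrix.mulVecLin_apply, mulVec_ext] at hy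
        rcases z with i | b
        · simp [LinearMap.restrict_apply, LinearMap.funLeft, extMap]
        · have hb := congrFun hy (Sum.inr b)
          simp only [Sum.elim_inr, Pi.zero_apply] at hb
          have : y (Sum.inr b) = ∑ j, nvec N j * y (Sum.inl j) := by
            have := hb
            rw [add_comm] at this
            rw [add_eq_zero_iff_eq_neg] at this
            simpa [CharTwo.neg_eq] using this
          simp [LinearMap.restrict_apply, LinearMap.funLeft, extMap, this])
  exact e.finrank_eq

/-- the swap of the two added vertices -/
def swapEquiv : V ⊕ Bool ≃ V ⊕ Bool :=
  (Equiv.refl V).sumCongr ⟨not, not, Bool.not_not, Bool.not_not⟩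

lemma Bmat_inr_swap (G : SimpleGraph V) (N : Set V) :
    Bmat (ext2 G N) (Sum.inr false) =
      (Bmat (ext2 G N) (Sum.inr true)).submatrix (swapEquiv (V := V)) (swapEquiv (V := V)) := by
  ext i j
  rcases i with i | b <;> rcases j with j | c
  · simp [Bmat, adjMat, ext2, extAdj, swapEquiv, Matrix.one_apply,
      Matrix.single, Matrix.add_apply]
  · rcases c <;>
      simp [Bmat, adjMat, ext2, extAdj, swapEquiv, Matrix.one_apply,
        Matrix.single, Matrix.add_apply] <;> congr
  · rcases b <;>
      simp [Bmat, adjMat, ext2, extAdj, swapEquiv, Matrix.one_apply,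
        Matrix.single, Matrix.add_apply] <;> congr
  · rcases b <;> rcases c <;>
      simp [Bmat, adjMat, ext2, extAdj, swapEquiv, Matrix.one_apply,
        Matrix.single, Matrix.add_apply]

lemma corank_Bmat_inr (G : SimpleGraph V) (N : Set V) :
    corankM (Bmat (ext2 G N) (Sum.inr true)) =
      corankM (Bmat (ext2 G N) (Sum.inr false)) := by
  unfold corankM
  rw [Bmat_inr_swap G N, Matrix.rank_submatrix]

end Aux

/-- The writhe number is invariant under Ω_g2; moreover the coranks of
`B_u` and `B_v` at the two new vertices coincide. -/
theorem writhe_omega2 {V : Type} [Fintype V] (G : SimpleGraph V) (N : Set V)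
    (σ : V → Bool) (h : corankM (adjMat G + 1) = 0) :
    writhe (ext2 G N) (Sum.elim σ (fun c => c)) = writhe G σ ∧
    corankM (Bmat (ext2 G N) (Sum.inr true)) =
      corankM (Bmat (ext2 G N) (Sum.inr false)) := by
  refine ⟨?_, corank_Bmat_inr G N⟩
  unfold writhe
  rw [Fintype.sum_sum_type, Fintype.sum_bool]
  have h1 : ∀ x : V,
      (-1 : ℤ) ^ (corankM (Bmat (ext2 G N) (Sum.inl x))) *
          (if Sum.elim σ (fun c => c) (Sum.inl x) then 1 else -1) =
        (-1 : ℤ) ^ (corankM (Bmat G x)) * (if σ x then 1 else -1) := by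
    intro x
    rw [corank_Bmat_inl G N x]
    simp
    by_cases hs : σ x = true <;> simp [hs]
  rw [Finset.sum_congr rfl (fun x _ => h1 x), corank_Bmat_inr G N]
  simp
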